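/- Let N ≥ 1 and let x, y ∈ V_N ∖ ∂_v^int V_N. For a configuration ω ∈ {0,1}^{E_N}, the following are equivalent: (i) there exists an open cluster A (a connected component of the graph (V_N, {e ∈ E_N : ω(e)=1})) with {x,y} ⊆ V_A and V_A ∩ ∂_v^int V_N = ∅; (ii) x and y are joined by a path of open edges of E_N, and the set C(ω) = {e ∈ E_N : ω(e)=0} of closed edges contains a contour γ surrounding {x,y}. -/

import Mathlib

open MeasureTheory Filter

/-- An edge of the square lattice `ℤ × ℤ`, encoded by its lower-left endpoint `base`
together with its direction: a horizontal edge joins `base` to `base + (1,0)`,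
a vertical edge joins `base` to `base + (0,1)`. This encodes exactly the set
`𝔼` of nearest-neighbour edges of `ℤ²`. -/
structure LatticeEdge where
  base : ℤ × ℤ
  horiz : Bool
deriving DecidableEq

namespace LatticeEdge

/-- First endpoint of an edge. -/
def fst (e : LatticeEdge) : ℤ × ℤ := e.base

/-- Second endpoint of an edge. -/
def snd (e : LatticeEdge) : ℤ × ℤ :=
  if e.horiz then (e.base.1 + 1, e.base.2) else (e.base.1, e.base.2 + 1)

/-- The two endpoints of an edge, as an unordered pair. -/
def ends (e : LatticeEdge) : Sym2 (ℤ × ℤ) := s(e.fst, e.snd)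

end LatticeEdge

/-- The graph on `ℤ²` whose edges are the lattice edges belonging to `S`. -/
def graphOf (S : Set LatticeEdge) : SimpleGraph (ℤ × ℤ) where
  Adj u v := u ≠ v ∧ ∃ e ∈ S, e.ends = s(u, v)
  symm := by
    constructor
    intro u v h
    obtain ⟨hne, e, he, hs⟩ := h
    exact ⟨hne.symm, e, he, hs.trans (Sym2.eq_swap)⟩
  loopless := by
    constructor
    intro u h
    exact h.1 rfl

/-- The graph `(ℤ², 𝔼 ∖ γ)` obtained by deleting the edges of `γ`. -/
def complGraph (γ : Finset LatticeEdge) : SimpleGraph (ℤ × ℤ) :=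
  graphOf {e | e ∉ γ}

/-- A finite set `γ` of lattice edges is a *contour* if the graph `(ℤ², 𝔼 ∖ γ)` has
exactly one finite connected component, and `γ` is minimal with this property:
for every `e ∈ γ`, the graph `(ℤ², 𝔼 ∖ (γ ∖ {e}))` has no finite connected component. -/
def IsContour (γ : Finset LatticeEdge) : Prop :=
  (∃! C : (complGraph γ).ConnectedComponent, C.supp.Finite) ∧
  ∀ e ∈ γ, ∀ C : (graphOf {f | f ∉ γ ∨ f = e}).ConnectedComponent, ¬ C.supp.Finite

/-- A contour `γ` *surrounds* a set `X ⊆ ℤ²` of vertices if `X` is contained in the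
vertex set `I_γ` of the (unique) finite connected component of `(ℤ², 𝔼 ∖ γ)`. -/
def Surrounds (γ : Finset LatticeEdge) (X : Set (ℤ × ℤ)) : Prop :=
  IsContour γ ∧ ∃ C : (complGraph γ).ConnectedComponent, C.supp.Finite ∧ X ⊆ C.supp

/-- `Γ^n_X` : the set of contours of cardinality `n` surrounding `X`. -/
def GammaN (X : Set (ℤ × ℤ)) (n : ℕ) : Set (Finset LatticeEdge) :=
  {γ | Surrounds γ X ∧ γ.card = n}

/-- `‖x‖ = 2(x₁ + x₂ + 2)`, the cardinality of a minimal contour surrounding `{0, x}`. -/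
def normC (x : ℤ × ℤ) : ℕ := (2 * (x.1 + x.2 + 2)).toNat

/-- `β_x` : the number of minimal contours surrounding `{0, x}`. -/
noncomputable def betaX (x : ℤ × ℤ) : ℕ := Nat.card ↥(GammaN {0, x} (normC x))

/-- Number of horizontal edges of `γ`, i.e. `|γ ∩ 𝔼ʰ|`. -/
def hCount (γ : Finset LatticeEdge) : ℕ := (γ.filter fun e => e.horiz = true).card

/-- Number of vertical edges of `γ`, i.e. `|γ ∩ 𝔼ᵛ|`. -/
def vCount (γ : Finset LatticeEdge) : ℕ := (γ.filter fun e => e.horiz = false).card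

/-- The dual edge `e*` of a lattice edge `e`.  We identify the dual lattice
`ℤ² + (1/2, 1/2)` with `ℤ²` via `(a,b) ↦ (a + 1/2, b + 1/2)`; under this
identification the dual edge crossing the horizontal edge `(a,b)–(a+1,b)` joins
`(a, b-1)` to `(a, b)` (a vertical dual edge), and the dual edge crossing the
vertical edge `(a,b)–(a,b+1)` joins `(a-1, b)` to `(a, b)` (a horizontal dual edge). -/
def dualEdge (e : LatticeEdge) : LatticeEdge :=
  if e.horiz then ⟨(e.base.1, e.base.2 - 1), false⟩ else ⟨(e.base.1 - 1, e.base.2), true⟩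

/-- A finite set `S` of (dual) lattice edges is a *circuit* if it is the edge set of a
closed self-avoiding path: there are `n ≥ 3` distinct vertices `c 0, …, c (n-1)`,
cyclically consecutive ones being joined by an edge of `S`, and every edge of `S` arising
this way. -/
def IsCircuit (S : Finset LatticeEdge) : Prop :=
  ∃ n : ℕ, 3 ≤ n ∧ ∃ c : ZMod n → ℤ × ℤ, Function.Injective c ∧
    (∀ i : ZMod n, ∃ e ∈ S, e.ends = s(c i, c (i + 1))) ∧
    (∀ e ∈ S, ∃ i : ZMod n, e.ends = s(c i, c (i + 1)))

/-- The dual edge `e_k*` joining `(k - 1/2, -1/2)` to `(k - 1/2, 1/2)`; in our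
identification of the dual lattice with `ℤ²` this is the vertical dual edge with base
`(k-1, -1)`, i.e. the dual of the horizontal edge `(k-1, 0)–(k, 0)`. -/
def ekStar (k : ℤ) : LatticeEdge := ⟨(k - 1, -1), false⟩

/-- The probability that the edge `e` is open: `p_h` for horizontal edges and `p_v`
for vertical ones. -/
noncomputable def edgeProb (ph pv : ℝ) (e : LatticeEdge) : ℝ := if e.horiz then ph else pv

/-- `P` is the Bernoulli product measure `P_{(p_h, p_v)}` on configurations
`ω ∈ {0,1}^𝔼` (encoded as `LatticeEdge → Bool`, `true` = open): it is a probability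
measure and, for every finite set of edges, the states of those edges are independent
Bernoulli variables with the correct parameters.  These cylinder probabilities
characterize the product measure uniquely. -/
def IsBernoulliProduct (ph pv : ℝ) (P : Measure (LatticeEdge → Bool)) : Prop :=
  IsProbabilityMeasure P ∧
    ∀ (F : Finset LatticeEdge) (σ : LatticeEdge → Bool),
      P {ω | ∀ e ∈ F, ω e = σ e} =
        ∏ e ∈ F, ENNReal.ofReal
          (if σ e then edgeProb ph pv e else 1 - edgeProb ph pv e)

/-- The graph of open edges of the configuration `ω`. -/
def openGraph (ω : LatticeEdge → Bool) : SimpleGraph (ℤ × ℤ) :=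
  graphOf {e | ω e = true}

/-- `x` and `y` belong to the same finite open cluster of the configuration `ω`. -/
def SameFiniteCluster (ω : LatticeEdge → Bool) (x y : ℤ × ℤ) : Prop :=
  ∃ C : (openGraph ω).ConnectedComponent, x ∈ C.supp ∧ y ∈ C.supp ∧ C.supp.Finite

/-- The truncated (finite) connectivity `τ^f_p(x,y)`: the probability that `x` and `y`
belong to the same finite open cluster. -/
noncomputable def tauF (P : Measure (LatticeEdge → Bool)) (x y : ℤ × ℤ) : ℝ :=
  (P {ω | SameFiniteCluster ω x y}).toReal

/-- The box `V_N = ([-N,N] × [-N,N]) ∩ ℤ²`. -/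
def VN (N : ℕ) : Set (ℤ × ℤ) := {v | |v.1| ≤ (N : ℤ) ∧ |v.2| ≤ (N : ℤ)}

/-- The interior vertex boundary `∂_v^int V_N = {x ∈ V_N : d(x, ℤ² ∖ V_N) = 1}`. -/
def intBdry (N : ℕ) : Set (ℤ × ℤ) :=
  {v | (|v.1| ≤ (N : ℤ) ∧ |v.2| ≤ (N : ℤ)) ∧ (|v.1| = (N : ℤ) ∨ |v.2| = (N : ℤ))}

/-- `e ∈ E_N`: both endpoints of `e` lie in `V_N`. -/
def edgeInBox (N : ℕ) (e : LatticeEdge) : Prop := e.fst ∈ VN N ∧ e.snd ∈ VN N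

/-- The graph on `(V_N, open edges of E_N)` (vertices outside `V_N` are isolated). -/
def openGraphN (N : ℕ) (ω : LatticeEdge → Bool) : SimpleGraph (ℤ × ℤ) :=
  graphOf {e | edgeInBox N e ∧ ω e = true}

/-- The finite-volume event defining `τ^{f,N}_p(x,y)`: there is an open cluster `A` of
`(V_N, open edges of E_N)` with `{x,y} ⊆ V_A` and `V_A ∩ ∂_v^int V_N = ∅`. -/
def FiniteVolEvent (N : ℕ) (x y : ℤ × ℤ) (ω : LatticeEdge → Bool) : Prop :=
  ∃ C : (openGraphN N ω).ConnectedComponent,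
    x ∈ C.supp ∧ y ∈ C.supp ∧ C.supp ∩ intBdry N = ∅

/-- The finite-volume finite connectivity `τ^{f,N}_p(x,y)`. -/
noncomputable def tauFN (P : Measure (LatticeEdge → Bool)) (N : ℕ) (x y : ℤ × ℤ) : ℝ :=
  (P {ω | FiniteVolEvent N x y ω}).toReal

/-- `λ = (1-p)/p`. -/
noncomputable def lam (p : ℝ) : ℝ := (1 - p) / p

/-- The threshold `η̃(p_h, x₁, x₂)` from the paper. -/
noncomputable def etaTilde (ph : ℝ) (x1 x2 : ℤ) : ℝ :=
  ((betaX (x1, x2) : ℝ) * ph ^ (4 * (x1 + x2 + 2)) /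
      ((4 ^ 3 * lam ph) ^ (x1 + x2 + 3) / (1 - 4 ^ 3 * lam ph) +
        (betaX (x1, x2) : ℝ) * (1 + 12 * lam ph) ^ (2 * (x1 + x2 + 2)))) ^
    (1 / (2 * ((x2 : ℝ) - (x1 : ℝ))))
namespace ContourAux

open SimpleGraph

lemma ends_eq_iff {e : LatticeEdge} {u v : ℤ × ℤ} :
    e.ends = s(u, v) ↔ (e.fst = u ∧ e.snd = v) ∨ (e.fst = v ∧ e.snd = u) :=
  Sym2.eq_iff

lemma fst_ne_snd (e : LatticeEdge) : e.fst ≠ e.snd := by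
  unfold LatticeEdge.fst LatticeEdge.snd
  cases h : e.horiz <;> simp [Prod.ext_iff]

lemma adj_of_mem {S : Set LatticeEdge} {e : LatticeEdge} (he : e ∈ S) :
    (graphOf S).Adj e.fst e.snd := ⟨fst_ne_snd e, e, he, rfl⟩

lemma graphOf_mono {S T : Set LatticeEdge} (h : S ⊆ T) : graphOf S ≤ graphOf T := by
  intro u v hadj
  obtain ⟨hne, e, he, hs⟩ := hadj
  exact ⟨hne, e, h he, hs⟩

lemma adj_horiz {S : Set LatticeEdge} {v : ℤ × ℤ} (h : (⟨v, true⟩ : LatticeEdge) ∈ S) :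
    (graphOf S).Adj v (v.1 + 1, v.2) := adj_of_mem h

lemma adj_vert {S : Set LatticeEdge} {v : ℤ × ℤ} (h : (⟨v, false⟩ : LatticeEdge) ∈ S) :
    (graphOf S).Adj v (v.1, v.2 + 1) := adj_of_mem h

lemma reach_right {S : Set LatticeEdge} (a : ℤ × ℤ) (k : ℕ)
    (h : ∀ j : ℕ, j < k → (⟨(a.1 + j, a.2), true⟩ : LatticeEdge) ∈ S) :
    (graphOf S).Reachable a (a.1 + k, a.2) := by
  induction k with
  | zero => simpa using Reachable.refl a
  | succ n ih =>
    have h1 := ih (fun j hj => h j (by omega))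
    have h2 : (graphOf S).Adj (a.1 + n, a.2) ((a.1 + n) + 1, a.2) :=
      adj_horiz (h n (by omega))
    have : (((a.1 + n) + 1 : ℤ), a.2) = (a.1 + ((n : ℕ) + 1 : ℕ), a.2) := by
      push_cast; ring_nf
    exact this ▸ (h1.trans h2.reachable)

lemma reach_up {S : Set LatticeEdge} (a : ℤ × ℤ) (k : ℕ)
    (h : ∀ j : ℕ, j < k → (⟨(a.1, a.2 + j), false⟩ : LatticeEdge) ∈ S) :
    (graphOf S).Reachable a (a.1, a.2 + k) := by
  induction k with
  | zero => simpa using Reachable.refl a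
  | succ n ih =>
    have h1 := ih (fun j hj => h j (by omega))
    have h2 : (graphOf S).Adj (a.1, a.2 + n) (a.1, (a.2 + n) + 1) :=
      adj_vert (h n (by omega))
    have : ((a.1 : ℤ), ((a.2 + n) + 1 : ℤ)) = (a.1, a.2 + ((n : ℕ) + 1 : ℕ)) := by
      push_cast; ring_nf
    exact this ▸ (h1.trans h2.reachable)

lemma mem_VN_iff {N : ℕ} {v : ℤ × ℤ} :
    v ∈ VN N ↔ -(N : ℤ) ≤ v.1 ∧ v.1 ≤ N ∧ -(N : ℤ) ≤ v.2 ∧ v.2 ≤ N := by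
  simp only [VN, Set.mem_setOf_eq, abs_le]; tauto

lemma mem_intBdry_iff {N : ℕ} {v : ℤ × ℤ} :
    v ∈ intBdry N ↔ (|v.1| ≤ (N : ℤ) ∧ |v.2| ≤ (N : ℤ)) ∧ (|v.1| = (N : ℤ) ∨ |v.2| = (N : ℤ)) :=
  Iff.rfl

/-- Horizontal movement along a line `y` with `|y| > N`, using edges outside the box. -/
lemma reach_hline {N : ℕ} {S : Set LatticeEdge}
    (hS : ∀ e : LatticeEdge, e.fst ∉ VN N → e.snd ∉ VN N → e ∈ S)
    {y : ℤ} (hy : (N : ℤ) < |y|) (x1 x2 : ℤ) :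
    (graphOf S).Reachable (x1, y) (x2, y) := by
  have hy' : y < -(N : ℤ) ∨ (N : ℤ) < y := by
    rcases lt_abs.mp hy with h | h
    · exact Or.inr h
    · exact Or.inl (by omega)
  have key : ∀ t : ℤ, ((⟨(t, y), true⟩ : LatticeEdge) ∈ S) := by
    intro t
    apply hS <;> · intro hmem; rw [mem_VN_iff] at hmem
                   simp [LatticeEdge.fst, LatticeEdge.snd] at hmem
                   omega
  have main : ∀ a b : ℤ, a ≤ b → (graphOf S).Reachable (a, y) (b, y) := by
    intro a b hab
    have := reach_right (S := S) (a, y) (b - a).toNat (fun j _ => key _)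
    have heq : ((a : ℤ) + ((b - a).toNat : ℤ), y) = ((b : ℤ), y) := by
      have : ((b - a).toNat : ℤ) = b - a := Int.toNat_of_nonneg (by omega)
      rw [this]; ring_nf
    rwa [heq] at this
  rcases le_total x1 x2 with h | h
  · exact main _ _ h
  · exact (main _ _ h).symm

/-- Vertical movement along a line `x` with `|x| > N`. -/
lemma reach_vline {N : ℕ} {S : Set LatticeEdge}
    (hS : ∀ e : LatticeEdge, e.fst ∉ VN N → e.snd ∉ VN N → e ∈ S)
    {x : ℤ} (hx : (N : ℤ) < |x|) (y1 y2 : ℤ) :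
    (graphOf S).Reachable (x, y1) (x, y2) := by
  have hx' : x < -(N : ℤ) ∨ (N : ℤ) < x := by
    rcases lt_abs.mp hx with h | h
    · exact Or.inr h
    · exact Or.inl (by omega)
  have key : ∀ t : ℤ, ((⟨(x, t), false⟩ : LatticeEdge) ∈ S) := by
    intro t
    apply hS <;> · intro hmem; rw [mem_VN_iff] at hmem
                   simp [LatticeEdge.fst, LatticeEdge.snd] at hmem
                   omega
  have main : ∀ a b : ℤ, a ≤ b → (graphOf S).Reachable (x, a) (x, b) := by
    intro a b hab
    have := reach_up (S := S) (x, a) (b - a).toNat (fun j _ => key _)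
    have heq : ((x : ℤ), (a : ℤ) + ((b - a).toNat : ℤ)) = ((x : ℤ), (b : ℤ)) := by
      have : ((b - a).toNat : ℤ) = b - a := Int.toNat_of_nonneg (by omega)
      rw [this]; ring_nf
    rwa [heq] at this
  rcases le_total y1 y2 with h | h
  · exact main _ _ h
  · exact (main _ _ h).symm

/-- Every vertex outside the box reaches the corner `(N+1, N+1)` using edges
whose endpoints are both outside the box. -/
lemma reach_corner {N : ℕ} {S : Set LatticeEdge}
    (hS : ∀ e : LatticeEdge, e.fst ∉ VN N → e.snd ∉ VN N → e ∈ S)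
    {v : ℤ × ℤ} (hv : v ∉ VN N) :
    (graphOf S).Reachable v ((N : ℤ) + 1, (N : ℤ) + 1) := by
  have hcorner : (N : ℤ) < |(N : ℤ) + 1| := by rw [abs_of_nonneg (by omega)]; omega
  rw [mem_VN_iff] at hv
  push_neg at hv
  by_cases h1 : (N : ℤ) < |v.1|
  · -- move vertically along x = v.1 to (v.1, N+1), then horizontally along y = N+1
    have r1 : (graphOf S).Reachable (v.1, v.2) (v.1, (N : ℤ) + 1) :=
      reach_vline hS h1 _ _
    have r2 : (graphOf S).Reachable (v.1, (N : ℤ) + 1) ((N : ℤ) + 1, (N : ℤ) + 1) :=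
      reach_hline hS hcorner _ _
    exact r1.trans r2
  · -- then |v.2| > N
    have h1' := abs_le.mp (not_lt.mp h1)
    have h2 : (N : ℤ) < |v.2| := by
      rcases le_or_gt v.2 (-(N : ℤ) - 1) with h | h
      · rw [lt_abs]; right; omega
      · have := hv h1'.1 h1'.2 (by omega)
        rw [lt_abs]; left; exact this
    have r1 : (graphOf S).Reachable (v.1, v.2) ((N : ℤ) + 1, v.2) :=
      reach_hline hS h2 _ _
    have r2 : (graphOf S).Reachable ((N : ℤ) + 1, v.2) ((N : ℤ) + 1, (N : ℤ) + 1) :=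
      reach_vline hS hcorner _ _
    exact r1.trans r2

/-- Reachability preserves adjacency-closed sets. -/
lemma reach_closed {V : Type*} {G : SimpleGraph V} {P : Set V}
    (hP : ∀ u v : V, G.Adj u v → u ∈ P → v ∈ P) :
    ∀ {u v : V}, G.Reachable u v → u ∈ P → v ∈ P := by
  intro u v h
  obtain ⟨w⟩ := h
  induction w with
  | nil => exact id
  | cons h p ih => exact fun hu => ih (hP _ _ h hu)

lemma VN_finite (N : ℕ) : (VN N).Finite := by
  apply (Set.finite_Icc ((-(N : ℤ), -(N : ℤ))) (((N : ℤ), (N : ℤ)))).subset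
  intro v hv
  rw [mem_VN_iff] at hv
  simp only [Set.mem_Icc, Prod.le_def]
  exact ⟨⟨hv.1, hv.2.2.1⟩, hv.2.1, hv.2.2.2⟩

lemma edgeInBox_finite (N : ℕ) : {e : LatticeEdge | edgeInBox N e}.Finite := by
  apply (((VN_finite N).prod Set.finite_univ).image
    (fun p : (ℤ × ℤ) × Bool => LatticeEdge.mk p.1 p.2)).subset
  intro e he
  exact ⟨(e.base, e.horiz), ⟨he.1, trivial⟩, rfl⟩

/-- If `e.fst` is in the box but not on its internal boundary, then `e.snd` is in the box. -/
lemma snd_mem_VN {N : ℕ} {e : LatticeEdge} (h1 : e.fst ∈ VN N) (h2 : e.fst ∉ intBdry N) :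
    e.snd ∈ VN N := by
  obtain ⟨⟨b1, b2⟩, hrz⟩ := e
  rw [mem_VN_iff] at h1
  dsimp only [LatticeEdge.fst] at h1 h2
  have hb : ¬(|b1| = (N : ℤ) ∨ |b2| = (N : ℤ)) := fun hc =>
    h2 ⟨⟨abs_le.mpr ⟨h1.1, h1.2.1⟩, abs_le.mpr ⟨h1.2.2.1, h1.2.2.2⟩⟩, hc⟩
  have hb1 : ¬(b1 = (N : ℤ) ∨ b1 = -(N : ℤ)) := fun hc =>
    (not_or.mp hb).1 ((abs_eq (by positivity)).mpr hc)
  have hb2 : ¬(b2 = (N : ℤ) ∨ b2 = -(N : ℤ)) := fun hc =>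
    (not_or.mp hb).2 ((abs_eq (by positivity)).mpr hc)
  push_neg at hb1 hb2
  rw [mem_VN_iff]
  cases hrz
  · have hsnd : (LatticeEdge.snd ⟨(b1, b2), false⟩) = (b1, b2 + 1) := rfl
    rw [hsnd]; dsimp only; omega
  · have hsnd : (LatticeEdge.snd ⟨(b1, b2), true⟩) = (b1 + 1, b2) := rfl
    rw [hsnd]; dsimp only; omega

/-- If `e.snd` is in the box but not on its internal boundary, then `e.fst` is in the box. -/
lemma fst_mem_VN {N : ℕ} {e : LatticeEdge} (h1 : e.snd ∈ VN N) (h2 : e.snd ∉ intBdry N) :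
    e.fst ∈ VN N := by
  obtain ⟨⟨b1, b2⟩, hrz⟩ := e
  rw [mem_VN_iff]
  dsimp only [LatticeEdge.fst]
  cases hrz
  · have hsnd : (LatticeEdge.snd ⟨(b1, b2), false⟩) = (b1, b2 + 1) := rfl
    rw [mem_VN_iff, hsnd] at h1
    rw [hsnd] at h2
    dsimp only at h1
    have hb : ¬(|b1| = (N : ℤ) ∨ |b2 + 1| = (N : ℤ)) := fun hc =>
      h2 ⟨⟨abs_le.mpr ⟨h1.1, h1.2.1⟩, abs_le.mpr ⟨h1.2.2.1, h1.2.2.2⟩⟩, hc⟩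
    have hb2 : ¬(b2 + 1 = (N : ℤ) ∨ b2 + 1 = -(N : ℤ)) := fun hc =>
      (not_or.mp hb).2 ((abs_eq (by positivity)).mpr hc)
    push_neg at hb2
    omega
  · have hsnd : (LatticeEdge.snd ⟨(b1, b2), true⟩) = (b1 + 1, b2) := rfl
    rw [mem_VN_iff, hsnd] at h1
    rw [hsnd] at h2
    dsimp only at h1
    have hb : ¬(|b1 + 1| = (N : ℤ) ∨ |b2| = (N : ℤ)) := fun hc =>
      h2 ⟨⟨abs_le.mpr ⟨h1.1, h1.2.1⟩, abs_le.mpr ⟨h1.2.2.1, h1.2.2.2⟩⟩, hc⟩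
    have hb1 : ¬(b1 + 1 = (N : ℤ) ∨ b1 + 1 = -(N : ℤ)) := fun hc =>
      (not_or.mp hb).1 ((abs_eq (by positivity)).mpr hc)
    push_neg at hb1
    omega

lemma reach_h_univ (a b y : ℤ) :
    (graphOf (Set.univ : Set LatticeEdge)).Reachable (a, y) (b, y) := by
  have main : ∀ a b : ℤ, a ≤ b →
      (graphOf (Set.univ : Set LatticeEdge)).Reachable (a, y) (b, y) := by
    intro a b hab
    have := reach_right (S := Set.univ) (a, y) (b - a).toNat (fun j _ => trivial)
    have heq : ((a : ℤ) + (((b - a).toNat : ℕ) : ℤ), y) = ((b : ℤ), y) := by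
      have h := Int.toNat_of_nonneg (show (0:ℤ) ≤ b - a by omega)
      rw [h]; ring_nf
    rwa [heq] at this
  rcases le_total a b with h | h
  · exact main _ _ h
  · exact (main _ _ h).symm

lemma reach_v_univ (x a b : ℤ) :
    (graphOf (Set.univ : Set LatticeEdge)).Reachable (x, a) (x, b) := by
  have main : ∀ a b : ℤ, a ≤ b →
      (graphOf (Set.univ : Set LatticeEdge)).Reachable (x, a) (x, b) := by
    intro a b hab
    have := reach_up (S := Set.univ) (x, a) (b - a).toNat (fun j _ => trivial)
    have heq : ((x : ℤ), (a : ℤ) + (((b - a).toNat : ℕ) : ℤ)) = ((x : ℤ), (b : ℤ)) := by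
      have h := Int.toNat_of_nonneg (show (0:ℤ) ≤ b - a by omega)
      rw [h]; ring_nf
    rwa [heq] at this
  rcases le_total a b with h | h
  · exact main _ _ h
  · exact (main _ _ h).symm

lemma reach_univ (v w : ℤ × ℤ) :
    (graphOf (Set.univ : Set LatticeEdge)).Reachable v w := by
  have h1 := reach_h_univ v.1 w.1 v.2
  have h2 := reach_v_univ w.1 v.2 w.2
  exact h1.trans h2

/-- Edges avoiding the vertex set `A`. -/
def SHe (A : Set (ℤ × ℤ)) : Set LatticeEdge := {e | e.fst ∉ A ∧ e.snd ∉ A}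

/-- The corner `(N+1, N+1)` just outside the box. -/
def cornerPt (N : ℕ) : ℤ × ℤ := ((N : ℤ) + 1, (N : ℤ) + 1)

/-- The exterior: vertices joined to the corner by a path avoiding `A`. -/
def Oset (N : ℕ) (A : Set (ℤ × ℤ)) : Set (ℤ × ℤ) :=
  {v | (graphOf (SHe A)).Reachable v (cornerPt N)}

/-- The interface edges between the exterior and its complement. -/
def Sgam (N : ℕ) (A : Set (ℤ × ℤ)) : Set LatticeEdge :=
  {e | (e.fst ∉ Oset N A ∧ e.snd ∈ Oset N A) ∨ (e.fst ∈ Oset N A ∧ e.snd ∉ Oset N A)}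

/-- Every vertex outside the exterior `Oset N A` reaches `x` in a graph `G'`
containing all edges avoiding the exterior, provided every vertex of `A` is
reachable from `x`. -/
lemma walk_reach {N : ℕ} {A : Set (ℤ × ℤ)} {G' : SimpleGraph (ℤ × ℤ)} {x : ℤ × ℤ}
    (hOnotA : ∀ v ∈ Oset N A, v ∉ A)
    (hAreach : ∀ v ∈ A, G'.Reachable x v)
    (hnotO : ∀ u w : ℤ × ℤ, u ∉ Oset N A → w ∉ Oset N A →
      (graphOf (Set.univ : Set LatticeEdge)).Adj u w → G'.Adj u w) :
    ∀ (v c : ℤ × ℤ) (_ : (graphOf (Set.univ : Set LatticeEdge)).Walk v c),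
      c ∈ Oset N A → v ∉ Oset N A → G'.Reachable v x := by
  intro v c W
  induction W with
  | nil => exact fun hc hv => absurd hc hv
  | @cons u w _ hadj p ih =>
    intro hc huO
    by_cases huA : u ∈ A
    · exact (hAreach u huA).symm
    · by_cases hwA : w ∈ A
      · have hwO : w ∉ Oset N A := fun h => hOnotA w h hwA
        exact (hnotO u w huO hwO hadj).reachable.trans (hAreach w hwA).symm
      · have hadjH : (graphOf (SHe A)).Adj u w := by
          obtain ⟨hne, e, -, hs⟩ := hadj
          refine ⟨hne, e, ?_, hs⟩
          rcases ends_eq_iff.mp hs with ⟨h1, h2⟩ | ⟨h1, h2⟩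
          · exact ⟨h1 ▸ huA, h2 ▸ hwA⟩
          · exact ⟨h1 ▸ hwA, h2 ▸ huA⟩
        by_cases hwO : w ∈ Oset N A
        · exact absurd (show u ∈ Oset N A from hadjH.reachable.trans hwO) huO
        · exact (hnotO u w huO hwO hadj).reachable.trans (ih hc hwO)

end ContourAux


open ContourAux SimpleGraph

/-- For `N ≥ 1`, `x, y ∈ V_N ∖ ∂_v^int V_N` and a configuration
`ω` on `E_N`, the following are equivalent: (i) there is an open cluster `A` of
`(V_N, {e ∈ E_N : ω(e) = 1})` with `{x,y} ⊆ V_A` and `V_A ∩ ∂_v^int V_N = ∅`;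
(ii) `x` and `y` are joined by a path of open edges of `E_N`, and the set of closed
edges of `E_N` contains a contour surrounding `{x,y}`. -/
theorem finiteVolEvent_iff_contour (N : ℕ) (hN : 1 ≤ N) (x y : ℤ × ℤ)
    (hx : x ∈ VN N \ intBdry N) (hy : y ∈ VN N \ intBdry N)
    (ω : LatticeEdge → Bool) :
    (∃ C : (openGraphN N ω).ConnectedComponent,
        x ∈ C.supp ∧ y ∈ C.supp ∧ C.supp ∩ intBdry N = ∅) ↔
      ((openGraphN N ω).Reachable x y ∧
        ∃ γ : Finset LatticeEdge, Surrounds γ {x, y} ∧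
          ∀ e ∈ γ, edgeInBox N e ∧ ω e = false) := by
  constructor
  · rintro ⟨C, hxA, hyA, hCb⟩
    classical
    have hAclosed : ∀ u w : ℤ × ℤ, (openGraphN N ω).Adj u w → u ∈ C.supp → w ∈ C.supp := by
      intro u w h hu
      rw [ConnectedComponent.mem_supp_iff] at hu ⊢
      rw [← hu]
      exact ConnectedComponent.sound h.symm.reachable
    have hGVN : ∀ u w : ℤ × ℤ, (openGraphN N ω).Adj u w → w ∈ VN N := by
      rintro u w ⟨-, e, ⟨hbox, -⟩, hs⟩
      rcases ends_eq_iff.mp hs with ⟨h1, h2⟩ | ⟨h1, h2⟩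
      · exact h2 ▸ hbox.2
      · exact h1 ▸ hbox.1
    have hreachA : ∀ v ∈ C.supp, (openGraphN N ω).Reachable x v := by
      intro v hv
      rw [ConnectedComponent.mem_supp_iff] at hv
      exact ConnectedComponent.exact
        (((ConnectedComponent.mem_supp_iff _ _).mp hxA).trans hv.symm)
    have hAsub : C.supp ⊆ VN N := by
      intro v hv
      have := reach_closed (G := openGraphN N ω) (P := {w | w ∈ VN N ∨ w = x})
        (fun u w h _ => Or.inl (hGVN u w h)) (hreachA v hv) (Or.inr rfl)
      rcases this with h | rfl
      · exact h
      · exact hx.1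
    have hAbd : ∀ v ∈ C.supp, v ∉ intBdry N := fun v hv hbd =>
      Set.eq_empty_iff_forall_notMem.mp hCb v ⟨hv, hbd⟩
    have hSHout : ∀ e : LatticeEdge, e.fst ∉ VN N → e.snd ∉ VN N → e ∈ SHe C.supp :=
      fun e h1 h2 => ⟨fun h => h1 (hAsub h), fun h => h2 (hAsub h)⟩
    have hOout : ∀ v : ℤ × ℤ, v ∉ VN N → v ∈ Oset N C.supp :=
      fun v hv => reach_corner hSHout hv
    have hcornerout : cornerPt N ∉ VN N := by
      rw [cornerPt, mem_VN_iff]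
      dsimp only
      omega
    have hOnotA : ∀ v ∈ Oset N C.supp, v ∉ C.supp := by
      intro v hv
      have hstep : ∀ u w : ℤ × ℤ, (graphOf (SHe C.supp)).Adj u w →
          u ∈ (C.suppᶜ : Set (ℤ × ℤ)) → w ∈ (C.suppᶜ : Set (ℤ × ℤ)) := by
        rintro u w ⟨-, e, ⟨he1, he2⟩, hs⟩ -
        rcases ends_eq_iff.mp hs with ⟨h1, h2⟩ | ⟨h1, h2⟩
        · exact h2 ▸ he2
        · exact h1 ▸ he1
      exact reach_closed hstep
        ((hv : (graphOf (SHe C.supp)).Reachable v (cornerPt N)).symm)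
        (fun h => hcornerout (hAsub h))
    have hkey : ∀ e ∈ Sgam N C.supp,
        (e.fst ∈ C.supp ∧ e.snd ∈ Oset N C.supp) ∨
        (e.snd ∈ C.supp ∧ e.fst ∈ Oset N C.supp) := by
      rintro e (⟨h1, h2⟩ | ⟨h1, h2⟩)
      · left
        refine ⟨?_, h2⟩
        by_contra hfA
        exact h1 (show e.fst ∈ Oset N C.supp from
          (adj_of_mem (show e ∈ SHe C.supp from ⟨hfA, hOnotA _ h2⟩)).reachable.trans h2)
      · right
        refine ⟨?_, h1⟩
        by_contra hsA
        exact h2 (show e.snd ∈ Oset N C.supp from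
          (adj_of_mem (show e ∈ SHe C.supp from ⟨hOnotA _ h1, hsA⟩)).symm.reachable.trans h1)
    have hclosed : ∀ e ∈ Sgam N C.supp, edgeInBox N e ∧ ω e = false := by
      intro e he
      have hbox : edgeInBox N e := by
        rcases hkey e he with ⟨ha, _⟩ | ⟨ha, _⟩
        · exact ⟨hAsub ha, snd_mem_VN (hAsub ha) (hAbd _ ha)⟩
        · exact ⟨fst_mem_VN (hAsub ha) (hAbd _ ha), hAsub ha⟩
      refine ⟨hbox, ?_⟩
      cases hωe : ω e
      · rfl
      · exfalso
        have hadj : (openGraphN N ω).Adj e.fst e.snd :=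
          adj_of_mem (show e ∈ {f | edgeInBox N f ∧ ω f = true} from ⟨hbox, hωe⟩)
        rcases hkey e he with ⟨ha, hb⟩ | ⟨ha, hb⟩
        · exact hOnotA _ hb (hAclosed _ _ hadj ha)
        · exact hOnotA _ hb (hAclosed _ _ hadj.symm ha)
    have hSγfin : (Sgam N C.supp).Finite :=
      (edgeInBox_finite N).subset (fun e he => (hclosed e he).1)
    have hmemγ : ∀ e : LatticeEdge, e ∈ hSγfin.toFinset ↔ e ∈ Sgam N C.supp :=
      fun e => Set.Finite.mem_toFinset _
    have hOclosed : ∀ u w : ℤ × ℤ, (complGraph hSγfin.toFinset).Adj u w →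
        u ∈ Oset N C.supp → w ∈ Oset N C.supp := by
      rintro u w ⟨hne, e, he, hs⟩ hu
      by_contra hw
      apply (he : e ∉ hSγfin.toFinset)
      rw [hmemγ]
      rcases ends_eq_iff.mp hs with ⟨h1, h2⟩ | ⟨h1, h2⟩
      · exact Or.inr ⟨h1 ▸ hu, h2 ▸ hw⟩
      · exact Or.inl ⟨h1 ▸ hw, h2 ▸ hu⟩
    have hOcclosed : ∀ u w : ℤ × ℤ, (complGraph hSγfin.toFinset).Adj u w →
        u ∉ Oset N C.supp → w ∉ Oset N C.supp := by
      rintro u w ⟨hne, e, he, hs⟩ hu hw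
      apply (he : e ∉ hSγfin.toFinset)
      rw [hmemγ]
      rcases ends_eq_iff.mp hs with ⟨h1, h2⟩ | ⟨h1, h2⟩
      · exact Or.inl ⟨h1 ▸ hu, h2 ▸ hw⟩
      · exact Or.inr ⟨h1 ▸ hw, h2 ▸ hu⟩
    have hHle : graphOf (SHe C.supp) ≤ complGraph hSγfin.toFinset := by
      apply graphOf_mono
      intro e heSH
      simp only [Set.mem_setOf_eq]
      rw [hmemγ]
      intro heγ
      rcases hkey e heγ with ⟨ha, _⟩ | ⟨ha, _⟩
      · exact heSH.1 ha
      · exact heSH.2 ha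
    have hGle : openGraphN N ω ≤ complGraph hSγfin.toFinset := by
      apply graphOf_mono
      rintro e ⟨hbox, hopen⟩
      simp only [Set.mem_setOf_eq]
      rw [hmemγ]
      intro heγ
      rcases hkey e heγ with ⟨ha, hb⟩ | ⟨ha, hb⟩
      · exact hOnotA _ hb (hAclosed _ _
          (adj_of_mem (show e ∈ {f | edgeInBox N f ∧ ω f = true} from ⟨hbox, hopen⟩)) ha)
      · exact hOnotA _ hb (hAclosed _ _
          (adj_of_mem (show e ∈ {f | edgeInBox N f ∧ ω f = true} from ⟨hbox, hopen⟩)).symm ha)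
    have hAreach : ∀ v ∈ C.supp, (complGraph hSγfin.toFinset).Reachable x v :=
      fun v hv => (hreachA v hv).mono hGle
    have hnotO : ∀ u w : ℤ × ℤ, u ∉ Oset N C.supp → w ∉ Oset N C.supp →
        (graphOf (Set.univ : Set LatticeEdge)).Adj u w →
        (complGraph hSγfin.toFinset).Adj u w := by
      rintro u w hu hw ⟨hne, e, -, hs⟩
      refine ⟨hne, e, ?_, hs⟩
      show e ∉ hSγfin.toFinset
      rw [hmemγ]
      rintro (⟨h1, h2⟩ | ⟨h1, h2⟩) <;>
        rcases ends_eq_iff.mp hs with ⟨ha, hb⟩ | ⟨ha, hb⟩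
      · exact hw (hb ▸ h2)
      · exact hu (hb ▸ h2)
      · exact hu (ha ▸ h1)
      · exact hw (ha ▸ h1)
    have hreachx : ∀ v : ℤ × ℤ, v ∉ Oset N C.supp →
        (complGraph hSγfin.toFinset).Reachable v x := by
      intro v hv
      obtain ⟨W⟩ := reach_univ v (cornerPt N)
      exact walk_reach hOnotA hAreach hnotO v (cornerPt N) W
        (show cornerPt N ∈ Oset N C.supp from Reachable.refl _) hv
    have hxO : x ∉ Oset N C.supp := fun h => hOnotA x h hxA
    have hsuppin : ((complGraph hSγfin.toFinset).connectedComponentMk x).supp =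
        ((Oset N C.supp)ᶜ : Set (ℤ × ℤ)) := by
      ext v
      constructor
      · intro hv
        have hr : (complGraph hSγfin.toFinset).Reachable x v :=
          (ConnectedComponent.exact ((ConnectedComponent.mem_supp_iff _ _).mp hv)).symm
        exact reach_closed hOcclosed hr hxO
      · intro hv
        exact (ConnectedComponent.mem_supp_iff _ _).mpr
          (ConnectedComponent.sound (hreachx v hv))
    have hcornerO : cornerPt N ∈ Oset N C.supp := Reachable.refl _
    have hsuppout : ((complGraph hSγfin.toFinset).connectedComponentMk (cornerPt N)).supp =
        Oset N C.supp := by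
      ext v
      constructor
      · intro hv
        have hr : (complGraph hSγfin.toFinset).Reachable (cornerPt N) v :=
          (ConnectedComponent.exact ((ConnectedComponent.mem_supp_iff _ _).mp hv)).symm
        exact reach_closed hOclosed hr hcornerO
      · intro hv
        exact (ConnectedComponent.mem_supp_iff _ _).mpr
          (ConnectedComponent.sound
            ((hv : (graphOf (SHe C.supp)).Reachable v (cornerPt N)).mono hHle))
    have hfin : ((complGraph hSγfin.toFinset).connectedComponentMk x).supp.Finite := by
      apply (VN_finite N).subset
      rw [hsuppin]
      intro v hv
      by_contra hvout
      exact hv (hOout v hvout)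
    have hOinf : (Oset N C.supp).Infinite := by
      have hinj : Function.Injective (fun k : ℕ => (((N : ℤ) + 1 + k, 0) : ℤ × ℤ)) := by
        intro a b hab
        simp only [Prod.mk.injEq] at hab
        omega
      have hmem : ∀ k : ℕ, (((N : ℤ) + 1 + k, 0) : ℤ × ℤ) ∈ Oset N C.supp := by
        intro k
        apply hOout
        rw [mem_VN_iff]
        dsimp only
        omega
      exact Set.infinite_of_injective_forall_mem hinj hmem
    have hcomp : ∀ D : (complGraph hSγfin.toFinset).ConnectedComponent,
        D = (complGraph hSγfin.toFinset).connectedComponentMk x ∨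
        D = (complGraph hSγfin.toFinset).connectedComponentMk (cornerPt N) := by
      intro D
      obtain ⟨v, rfl⟩ := D.exists_rep
      by_cases hv : v ∈ Oset N C.supp
      · right
        exact (ConnectedComponent.mem_supp_iff _ _).mp (hsuppout ▸ hv)
      · left
        exact (ConnectedComponent.mem_supp_iff _ _).mp (hsuppin ▸ hv)
    have hC1 : ∃! D : (complGraph hSγfin.toFinset).ConnectedComponent, D.supp.Finite := by
      refine ⟨(complGraph hSγfin.toFinset).connectedComponentMk x, hfin, ?_⟩
      intro D hD
      rcases hcomp D with rfl | rfl
      · rfl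
      · exact absurd hD (hsuppout ▸ hOinf)
    have hC2 : ∀ e ∈ hSγfin.toFinset,
        ∀ D : (graphOf {f : LatticeEdge | f ∉ hSγfin.toFinset ∨ f = e}).ConnectedComponent,
        ¬ D.supp.Finite := by
      intro e he D hD
      have hle : complGraph hSγfin.toFinset ≤
          graphOf {f : LatticeEdge | f ∉ hSγfin.toFinset ∨ f = e} :=
        graphOf_mono (fun f hf => Or.inl hf)
      have hadje : (graphOf {f : LatticeEdge | f ∉ hSγfin.toFinset ∨ f = e}).Adj e.fst e.snd :=
        adj_of_mem (Or.inr rfl)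
      have hconn : ∀ v : ℤ × ℤ,
          (graphOf {f : LatticeEdge | f ∉ hSγfin.toFinset ∨ f = e}).Reachable v (cornerPt N) := by
        intro v
        by_cases hv : v ∈ Oset N C.supp
        · exact ((hv : (graphOf (SHe C.supp)).Reachable v (cornerPt N)).mono hHle).mono hle
        · have h1 := hreachx v hv
          rcases hkey e ((hmemγ e).mp he) with ⟨ha, hb⟩ | ⟨ha, hb⟩
          · exact ((h1.symm.symm.trans ((hAreach _ ha))).mono hle |>.symm.symm).trans
              (hadje.reachable.trans
                (((hb : (graphOf (SHe C.supp)).Reachable e.snd (cornerPt N)).mono hHle).mono hle))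
          · exact ((h1.trans (hAreach _ ha)).mono hle).trans
              (hadje.symm.reachable.trans
                (((hb : (graphOf (SHe C.supp)).Reachable e.fst (cornerPt N)).mono hHle).mono hle))
      have hsub : Oset N C.supp ⊆ D.supp := by
        obtain ⟨v, rfl⟩ := D.exists_rep
        intro u hu
        exact (ConnectedComponent.mem_supp_iff _ _).mpr
          (ConnectedComponent.sound ((hconn u).trans (hconn v).symm))
      exact (hOinf.mono hsub) hD
    have hxyin : ({x, y} : Set (ℤ × ℤ)) ⊆
        ((complGraph hSγfin.toFinset).connectedComponentMk x).supp := by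
      rw [hsuppin]
      rintro v (rfl | rfl)
      · exact fun h => hOnotA v h hxA
      · exact fun h => hOnotA v h hyA
    refine ⟨?_, hSγfin.toFinset,
      ⟨⟨hC1, hC2⟩, (complGraph hSγfin.toFinset).connectedComponentMk x, hfin, hxyin⟩,
      fun e he => hclosed e ((hmemγ e).mp he)⟩
    exact ConnectedComponent.exact
      (((ConnectedComponent.mem_supp_iff _ _).mp hxA).trans
        ((ConnectedComponent.mem_supp_iff _ _).mp hyA).symm)
  · rintro ⟨hreach, γ, ⟨hcont, Cf, hCfin, hxyCf⟩, hedges⟩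
    refine ⟨(openGraphN N ω).connectedComponentMk x,
      (ConnectedComponent.mem_supp_iff _ _).mpr rfl,
      (ConnectedComponent.mem_supp_iff _ _).mpr (ConnectedComponent.sound hreach.symm), ?_⟩
    rw [Set.eq_empty_iff_forall_notMem]
    rintro v ⟨hvsupp, hvbd⟩
    -- open in-box edges are not in γ
    have hmono : openGraphN N ω ≤ complGraph γ := by
      apply graphOf_mono
      intro e he
      simp only [Set.mem_setOf_eq] at he ⊢
      intro hγ
      have h1 := he.2
      rw [(hedges e hγ).2] at h1
      exact Bool.false_ne_true h1
    -- edges with an endpoint outside the box are not in γ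
    have hγout : ∀ e : LatticeEdge, e.fst ∉ VN N → e.snd ∉ VN N → e ∈ {f : LatticeEdge | f ∉ γ} := by
      intro e h1 _ hγ
      exact h1 (hedges e hγ).1.1
    have hγout' : ∀ e : LatticeEdge, (e.fst ∉ VN N ∨ e.snd ∉ VN N) → e ∉ γ := by
      rintro e (h | h) hγ
      · exact h (hedges e hγ).1.1
      · exact h (hedges e hγ).1.2
    -- x ∈ Cf.supp, hence v ∈ Cf.supp
    have hxCf : x ∈ Cf.supp := hxyCf (by simp)
    have hvx : (openGraphN N ω).Reachable x v :=
      (ConnectedComponent.exact ((ConnectedComponent.mem_supp_iff _ _).mp hvsupp)).symm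
    have hvCf : v ∈ Cf.supp := by
      rw [ConnectedComponent.mem_supp_iff] at hxCf ⊢
      rw [← hxCf]
      exact ConnectedComponent.sound ((hvx.mono hmono).symm)
    -- v has a neighbour w outside the box, adjacent in complGraph γ
    obtain ⟨w, hwout, hadj⟩ : ∃ w : ℤ × ℤ, w ∉ VN N ∧ (complGraph γ).Adj v w := by
      obtain ⟨⟨hv1, hv2⟩, hv3 | hv3⟩ := hvbd
      · rcases (abs_eq (by positivity)).mp hv3 with h | h
        · -- v.1 = N : go right
          refine ⟨(v.1 + 1, v.2), ?_, ?_⟩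
          · rw [mem_VN_iff]; omega
          · have := adj_of_mem (S := {f : LatticeEdge | f ∉ γ}) (e := ⟨v, true⟩)
              (hγout' _ (Or.inr (by rw [mem_VN_iff]; dsimp only [LatticeEdge.snd]; simp; omega)))
            exact this
        · -- v.1 = -N : go left
          refine ⟨(v.1 - 1, v.2), ?_, ?_⟩
          · rw [mem_VN_iff]; omega
          · have hsnd : (LatticeEdge.snd ⟨(v.1 - 1, v.2), true⟩) = v := by
              show (v.1 - 1 + 1, v.2) = v
              rw [Prod.ext_iff]; constructor
              · dsimp only; omega
              · rfl
            have := adj_of_mem (S := {f : LatticeEdge | f ∉ γ}) (e := ⟨(v.1 - 1, v.2), true⟩)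
              (hγout' _ (Or.inl (by rw [mem_VN_iff]; dsimp only [LatticeEdge.fst]; omega)))
            rw [hsnd] at this
            exact this.symm
      · rcases (abs_eq (by positivity)).mp hv3 with h | h
        · -- v.2 = N : go up
          refine ⟨(v.1, v.2 + 1), ?_, ?_⟩
          · rw [mem_VN_iff]; omega
          · have := adj_of_mem (S := {f : LatticeEdge | f ∉ γ}) (e := ⟨v, false⟩)
              (hγout' _ (Or.inr (by rw [mem_VN_iff]; dsimp only [LatticeEdge.snd]; simp; omega)))
            exact this
        · -- v.2 = -N : go down
          refine ⟨(v.1, v.2 - 1), ?_, ?_⟩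
          · rw [mem_VN_iff]; omega
          · have hsnd : (LatticeEdge.snd ⟨(v.1, v.2 - 1), false⟩) = v := by
              show (v.1, v.2 - 1 + 1) = v
              rw [Prod.ext_iff]; constructor
              · rfl
              · dsimp only; omega
            have := adj_of_mem (S := {f : LatticeEdge | f ∉ γ}) (e := ⟨(v.1, v.2 - 1), false⟩)
              (hγout' _ (Or.inl (by rw [mem_VN_iff]; dsimp only [LatticeEdge.fst]; omega)))
            rw [hsnd] at this
            exact this.symm
    have hwCf : w ∈ Cf.supp := by
      rw [ConnectedComponent.mem_supp_iff] at hvCf ⊢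
      rw [← hvCf]
      exact ConnectedComponent.sound hadj.symm.reachable
    -- every vertex outside the box is in Cf.supp, so Cf.supp is infinite
    have houtCf : ∀ u : ℤ × ℤ, u ∉ VN N → u ∈ Cf.supp := by
      intro u hu
      have h1 : (complGraph γ).Reachable u ((N : ℤ) + 1, (N : ℤ) + 1) := reach_corner hγout hu
      have h2 : (complGraph γ).Reachable w ((N : ℤ) + 1, (N : ℤ) + 1) := reach_corner hγout hwout
      rw [ConnectedComponent.mem_supp_iff] at hwCf ⊢
      rw [← hwCf]
      exact ConnectedComponent.sound (h1.trans h2.symm)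
    have hinj : Function.Injective (fun k : ℕ => (((N : ℤ) + 1 + k, 0) : ℤ × ℤ)) := by
      intro a b hab
      simp only [Prod.mk.injEq] at hab
      omega
    have hmem : ∀ k : ℕ, (((N : ℤ) + 1 + k, 0) : ℤ × ℤ) ∈ Cf.supp := by
      intro k
      apply houtCf
      rw [mem_VN_iff]
      dsimp only
      omega
    exact Set.infinite_of_injective_forall_mem hinj hmem hCfin
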